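/- For every a > 0 there is a constant C > 0 such that for every ε ∈ (0,1]: ε^{−1} ∫_{ℝ³} Σ_{i,j} σ_{ij}(ξ/ε) ξ_i ξ_j e^{−a|ξ|²} dξ ≤ C ε². (This quantifies the vanishing, as ε → 0, of the rescaled ion–electron Landau collision dissipation evaluated on Maxwellians, since ∇_ξ of a Gaussian is proportional to ξ times the Gaussian.) -/

import Mathlib

open MeasureTheory Real

noncomputable section

abbrev E3 := EuclideanSpace ℝ (Fin 3)

/-- Landau collision kernel entries. -/
def Phi (z : E3) (i j : Fin 3) : ℝ :=
  (if i = j then (1 : ℝ) else 0) / ‖z‖ - z i * z j / ‖z‖ ^ 3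

/-- Japanese bracket of a vector. -/
def jap (v : E3) : ℝ := Real.sqrt (1 + ‖v‖ ^ 2)

/-- Japanese bracket of a real number. -/
def japR (r : ℝ) : ℝ := Real.sqrt (1 + r ^ 2)

/-- Maxwellian with inverse temperature `q`. -/
def maxw (q : ℝ) (ξ : E3) : ℝ :=
  (q / (2 * π)) ^ ((3 : ℝ) / 2) * Real.exp (-q * ‖ξ‖ ^ 2 / 2)

def sqMaxw (q : ℝ) (ξ : E3) : ℝ := Real.sqrt (maxw q ξ)

/-- Entrywise convolution `(Φ_{ij} ∗ G)(v)`. -/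
def convPhi (G : E3 → ℝ) (i j : Fin 3) (v : E3) : ℝ := ∫ w : E3, Phi (v - w) i j * G w

/-- `σ_{ij} = Φ_{ij} ∗ μ` with `μ = μ₁` the standard Maxwellian. -/
def sigmaM (i j : Fin 3) (v : E3) : ℝ := convPhi (maxw 1) i j v

/-- Orthogonal projection onto `span {v}`. -/
def projPar (v u : E3) : E3 := ((inner ℝ u v : ℝ) / ‖v‖ ^ 2) • v

/-- Orthogonal projection onto `{v}ᗮ`. -/
def projPerp (v u : E3) : E3 := u - projPar v u

/-- Cone of points making angle less than `θ` with the line spanned by `ν`. -/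
def Acone (ν : E3) (θ : ℝ) : Set E3 := {w : E3 | ‖projPerp ν w‖ < Real.sin θ * ‖w‖}

def e3 (i : Fin 3) : E3 := EuclideanSpace.single i 1

/-- Partial derivative in direction `i`. -/
def pd (i : Fin 3) (f : E3 → ℝ) (v : E3) : ℝ := fderiv ℝ f v (e3 i)

/-- The Landau collision operator in divergence form. -/
def Qop (G₁ G₂ : E3 → ℝ) (v : E3) : ℝ :=
  ∑ i, pd i (fun w => ∑ j, ∫ w' : E3,
    Phi (w - w') i j * (G₁ w' * pd j G₂ w - G₂ w * pd j G₁ w')) v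

/-- Rescaled electron–ion collision operator `Q^ε_{−+}`. -/
def Qmp (ε : ℝ) (G₁ G₂ : E3 → ℝ) (v : E3) : ℝ :=
  ∑ i, pd i (fun w => ∑ j, ∫ ξ' : E3,
    Phi (ε • w - ξ') i j * (ε * G₁ ξ' * pd j G₂ w - G₂ w * pd j G₁ ξ')) v

/-- Rescaled ion–electron collision operator `Q^ε_{+−}`. -/
def Qpm (ε : ℝ) (G₁ G₂ : E3 → ℝ) (ξ : E3) : ℝ :=
  ∑ i, pd i (fun w => ∑ j, ∫ v' : E3,
    Phi (w - ε • v') i j * (G₁ v' * pd j G₂ w - ε * G₂ w * pd j G₁ v')) ξ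

def lap (f : E3 → ℝ) (x : E3) : ℝ := ∑ i, pd i (pd i f) x

/-- Fundamental domain for the torus `𝕋³ = (ℝ/ℤ)³`. -/
def cube : Set E3 := {x : E3 | ∀ i, x i ∈ Set.Ico (0 : ℝ) 1}

def L2norm (ψ : E3 → ℝ) : ℝ := Real.sqrt (∫ v : E3, ψ v ^ 2)

def L2ip (f g : E3 → ℝ) : ℝ := ∫ v : E3, f v * g v

/-- Square of the `H_σ` norm. -/
def HsigSq (ψ : E3 → ℝ) : ℝ :=
  (∫ v : E3, ∑ i, ∑ j, sigmaM i j v * pd i ψ v * pd j ψ v) +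
    ∫ v : E3, (∑ i, sigmaM i i v) * ψ v ^ 2

def HsigNorm (ψ : E3 → ℝ) : ℝ := Real.sqrt (HsigSq ψ)

/-- Square of the `H⁻_{σ;ε}` seminorm. -/
def HminSq (ε : ℝ) (ψ : E3 → ℝ) : ℝ :=
  ε⁻¹ * ∫ ξ : E3, ∑ i, ∑ j, sigmaM i j (ε⁻¹ • ξ) * pd i ψ ξ * pd j ψ ξ

def HminNorm (ε : ℝ) (ψ : E3 → ℝ) : ℝ := Real.sqrt (HminSq ε ψ)

/-- Orthogonal `L²` projection onto
`span {μ_γ^{1/2}, ξ₁μ_γ^{1/2}, ξ₂μ_γ^{1/2}, ξ₃μ_γ^{1/2}, |ξ|²μ_γ^{1/2}}`, computed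
via the orthonormal basis `μ_γ^{1/2}, √γ ξ_i μ_γ^{1/2}, (γ|ξ|²−3)/√6 μ_γ^{1/2}`. -/
def Pgam (γ : ℝ) (h : E3 → ℝ) (ξ : E3) : ℝ :=
  (∫ ζ : E3, h ζ * sqMaxw γ ζ) * sqMaxw γ ξ +
  (∑ i, (∫ ζ : E3, h ζ * (Real.sqrt γ * ζ i * sqMaxw γ ζ)) * (Real.sqrt γ * ξ i * sqMaxw γ ξ)) +
  (∫ ζ : E3, h ζ * ((γ * ‖ζ‖ ^ 2 - 3) / Real.sqrt 6 * sqMaxw γ ζ)) *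
    ((γ * ‖ξ‖ ^ 2 - 3) / Real.sqrt 6 * sqMaxw γ ξ)

def PgamPerp (γ : ℝ) (h : E3 → ℝ) (ξ : E3) : ℝ := h ξ - Pgam γ h ξ

/-- Linearized Landau operator `ℒ_γ` (nonnegative sign convention). -/
def Lgam (γ : ℝ) (h : E3 → ℝ) (ξ : E3) : ℝ :=
  -(sqMaxw γ ξ)⁻¹ *
    (Qop (fun w => sqMaxw γ w * h w) (maxw γ) ξ + Qop (maxw γ) (fun w => sqMaxw γ w * h w) ξ)

/-- Two-temperature linearized operator `ℒ̃_{γ,q}`. -/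
def Ltil (γ q : ℝ) (h : E3 → ℝ) (ξ : E3) : ℝ :=
  -(sqMaxw q ξ)⁻¹ *
    (Qop (fun w => sqMaxw q w * h w) (maxw γ) ξ + Qop (maxw γ) (fun w => sqMaxw q w * h w) ξ)

/-- Nonlinear collision form `Γ_q`. -/
def Gamq (q : ℝ) (h₁ h₂ : E3 → ℝ) (ξ : E3) : ℝ :=
  -(sqMaxw q ξ)⁻¹ * Qop (fun w => sqMaxw q w * h₁ w) (fun w => sqMaxw q w * h₂ w) ξ

/-- Linearized ion–electron operator `ℳ_{q,G}` (nonnegative sign convention). -/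
def Mqg (ε q : ℝ) (G h : E3 → ℝ) (ξ : E3) : ℝ :=
  -(sqMaxw q ξ)⁻¹ * Qpm ε G (fun w => sqMaxw q w * h w) ξ


namespace Stmt19Aux

open Metric Set
open scoped NNReal ENNReal

lemma integrableOn_inv_norm_ball : IntegrableOn (fun y : E3 => ‖y‖⁻¹) (ball 0 1) volume := by
  set V := volume (ball (0:E3) 1) with hV
  constructor
  · exact (measurable_norm.inv).aestronglyMeasurable
  · unfold HasFiniteIntegral
    have hnn : ∀ y : E3, ‖(‖y‖⁻¹)‖ₑ = ENNReal.ofReal (‖y‖⁻¹) := by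
      intro y
      rw [← ofReal_norm_eq_enorm, Real.norm_eq_abs, abs_of_nonneg (by positivity)]
    simp only []
    simp_rw [hnn]
    rw [lintegral_eq_lintegral_meas_lt _ (f := fun y : E3 => ‖y‖⁻¹) (Filter.Eventually.of_forall fun y => by positivity)
      (measurable_norm.inv.aemeasurable)]
    have key : ∀ t ∈ Ioi (0:ℝ),
        (volume.restrict (ball (0:E3) 1)) {y | t < ‖y‖⁻¹}
          ≤ min V (ENNReal.ofReal (t⁻¹ ^ 3) * V) := by
      intro t ht
      refine le_min ?_ ?_
      · calc (volume.restrict (ball (0:E3) 1)) {y | t < ‖y‖⁻¹}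
            ≤ (volume.restrict (ball (0:E3) 1)) univ := measure_mono (subset_univ _)
          _ = V := by rw [Measure.restrict_apply_univ]
      · have hsub : {y : E3 | t < ‖y‖⁻¹} ⊆ ball 0 t⁻¹ := by
          intro y hy
          simp only [mem_setOf_eq] at hy
          have hy0 : 0 < ‖y‖ := by
            by_contra h
            push_neg at h
            have : ‖y‖ = 0 := le_antisymm h (norm_nonneg _)
            rw [this] at hy; simp at hy; linarith [ht.out]
          have h1 : t * ‖y‖ < 1 := by
            have := mul_lt_mul_of_pos_right hy hy0
            rwa [inv_mul_cancel₀ hy0.ne'] at this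
          have : ‖y‖ < t⁻¹ := by
            have h2 := mul_lt_mul_of_pos_left h1 (inv_pos.2 ht.out)
            rwa [← mul_assoc, inv_mul_cancel₀ ht.out.ne', one_mul, mul_one] at h2
          simpa [mem_ball, dist_zero_right]
        calc (volume.restrict (ball (0:E3) 1)) {y | t < ‖y‖⁻¹}
            ≤ volume {y : E3 | t < ‖y‖⁻¹} := Measure.restrict_le_self _
          _ ≤ volume (ball (0:E3) t⁻¹) := measure_mono hsub
          _ = ENNReal.ofReal (t⁻¹ ^ 3) * V := by
              rw [Measure.addHaar_ball _ _ (inv_nonneg.2 ht.out.le)]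
              congr 1
              simp [finrank_euclideanSpace]
    calc ∫⁻ t in Ioi (0:ℝ), (volume.restrict (ball (0:E3) 1)) {y | t < ‖y‖⁻¹}
        ≤ ∫⁻ t in Ioi (0:ℝ), min V (ENNReal.ofReal (t⁻¹ ^ 3) * V) := by
          exact setLIntegral_mono_ae (by fun_prop) (Filter.Eventually.of_forall key)
      _ < ⊤ := by
          have hVlt : V < ⊤ := measure_ball_lt_top
          have hsplit : Ioi (0:ℝ) = Ioc (0:ℝ) 1 ∪ Ioi 1 := (Ioc_union_Ioi_eq_Ioi zero_le_one).symm
          rw [hsplit, lintegral_union measurableSet_Ioi (Set.Ioc_disjoint_Ioi le_rfl)]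
          refine ENNReal.add_lt_top.mpr ⟨?_, ?_⟩
          · calc ∫⁻ t in Ioc (0:ℝ) 1, min V (ENNReal.ofReal (t⁻¹ ^ 3) * V)
                ≤ ∫⁻ _ in Ioc (0:ℝ) 1, V :=
                  setLIntegral_mono' measurableSet_Ioc (fun t _ => min_le_left _ _)
              _ = V * volume (Ioc (0:ℝ) 1) := setLIntegral_const _ _
              _ ≤ V * 1 := by rw [Real.volume_Ioc]; gcongr; simp [ENNReal.ofReal_le_one]
              _ < ⊤ := by simpa using hVlt
          · have hint : IntegrableOn (fun t : ℝ => t ^ (-3:ℝ)) (Ioi 1) volume :=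
              integrableOn_Ioi_rpow_of_lt (by norm_num) one_pos
            have hfin : ∫⁻ t in Ioi (1:ℝ), ENNReal.ofReal (t⁻¹ ^ 3) < ⊤ := by
              have h2 := hint.2
              unfold HasFiniteIntegral at h2
              refine lt_of_le_of_lt (le_of_eq ?_) h2
              refine setLIntegral_congr_fun measurableSet_Ioi ?_
              intro t ht
              have ht0 : (0:ℝ) < t := lt_trans one_pos ht
              have : t ^ (-3:ℝ) = t⁻¹ ^ 3 := by
                rw [show (-3:ℝ) = -(3:ℕ) by norm_num, Real.rpow_neg ht0.le, Real.rpow_natCast,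
                  inv_pow]
              dsimp only
              rw [← ofReal_norm_eq_enorm, Real.norm_eq_abs,
                abs_of_nonneg (Real.rpow_nonneg ht0.le _), this]
            calc ∫⁻ t in Ioi (1:ℝ), min V (ENNReal.ofReal (t⁻¹ ^ 3) * V)
                ≤ ∫⁻ t in Ioi (1:ℝ), ENNReal.ofReal (t⁻¹ ^ 3) * V :=
                  setLIntegral_mono' measurableSet_Ioi (fun t _ => min_le_right _ _)
              _ = (∫⁻ t in Ioi (1:ℝ), ENNReal.ofReal (t⁻¹ ^ 3)) * V :=
                  lintegral_mul_const V (by fun_prop)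
              _ < ⊤ := ENNReal.mul_lt_top hfin hVlt

lemma integrable_gauss {b : ℝ} (hb : 0 < b) :
    Integrable (fun x : E3 => Real.exp (-b * ‖x‖ ^ 2)) volume := by
  have h := GaussianFourier.integrable_cexp_neg_mul_sq_norm_add (b := (b:ℂ))
    (by simpa using hb) 0 (0 : E3)
  refine h.norm.congr (Filter.Eventually.of_forall fun x => ?_)
  simp only [Complex.norm_exp]
  congr 1
  simp [Complex.add_re, Complex.mul_re]
  left
  norm_cast

/-- The local dominating function near the singularity. -/
def g1 (c : E3) : E3 → ℝ := (ball (0:E3) 1).indicator (fun y => ‖y‖⁻¹) ∘ (fun x => x - c)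

lemma g1_integrable (c : E3) : Integrable (g1 c) volume := by
  have h0 : Integrable ((ball (0:E3) 1).indicator (fun y : E3 => ‖y‖⁻¹)) volume :=
    (integrable_indicator_iff measurableSet_ball).2 integrableOn_inv_norm_ball
  exact h0.comp_sub_right c

lemma g1_integral (c : E3) : ∫ x : E3, g1 c x = ∫ y in ball (0:E3) 1, ‖y‖⁻¹ := by
  have := integral_sub_right_eq_self (μ := volume) ((ball (0:E3) 1).indicator (fun y : E3 => ‖y‖⁻¹)) c
  unfold g1
  rw [show ((ball (0:E3) 1).indicator (fun y : E3 => ‖y‖⁻¹) ∘ (fun x => x - c))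
      = fun x => (ball (0:E3) 1).indicator (fun y : E3 => ‖y‖⁻¹) (x - c) from rfl]
  rw [this, integral_indicator measurableSet_ball]

lemma g1_nonneg (c : E3) (x : E3) : 0 ≤ g1 c x := by
  unfold g1
  simp only [Function.comp_apply]
  exact Set.indicator_nonneg (fun y _ => by positivity) _

lemma gauss_div_bound {b : ℝ} (hb : 0 ≤ b) (c : E3) (x : E3) :
    Real.exp (-b * ‖x‖ ^ 2) / ‖x - c‖
      ≤ g1 c x + Real.exp (-b * ‖x‖ ^ 2) := by
  have hg1 : g1 c x = (ball (0:E3) 1).indicator (fun y => ‖y‖⁻¹) (x - c) := rfl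
  by_cases h : ‖x - c‖ < 1
  · have hmem : x - c ∈ ball (0:E3) 1 := by simpa [mem_ball, dist_zero_right] using h
    rw [hg1, Set.indicator_of_mem hmem]
    have hexp : Real.exp (-b * ‖x‖ ^ 2) ≤ 1 := by
      apply Real.exp_le_one_iff.mpr
      nlinarith [sq_nonneg ‖x‖]
    have hdiv : Real.exp (-b * ‖x‖ ^ 2) / ‖x - c‖ ≤ ‖x - c‖⁻¹ := by
      rcases eq_or_lt_of_le (norm_nonneg (x - c)) with h0 | h0
      · rw [← h0]; simp
      · rw [← one_div, div_le_div_iff₀ h0 h0]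
        nlinarith
    calc Real.exp (-b * ‖x‖ ^ 2) / ‖x - c‖ ≤ ‖x - c‖⁻¹ := hdiv
      _ ≤ ‖x - c‖⁻¹ + Real.exp (-b * ‖x‖ ^ 2) := le_add_of_nonneg_right (Real.exp_nonneg _)
  · push_neg at h
    rw [hg1, Set.indicator_of_notMem (by simpa [mem_ball, dist_zero_right] using h)]
    have : Real.exp (-b * ‖x‖ ^ 2) / ‖x - c‖ ≤ Real.exp (-b * ‖x‖ ^ 2) :=
      div_le_self (Real.exp_nonneg _) h
    linarith [g1_nonneg c x]

lemma gauss_div_nonneg {b : ℝ} (c x : E3) : 0 ≤ Real.exp (-b * ‖x‖ ^ 2) / ‖x - c‖ := by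
  positivity

lemma meas_gauss_div (b : ℝ) (c : E3) :
    Measurable (fun x : E3 => Real.exp (-b * ‖x‖ ^ 2) / ‖x - c‖) := by
  fun_prop

lemma integrable_gauss_div {b : ℝ} (hb : 0 < b) (c : E3) :
    Integrable (fun x : E3 => Real.exp (-b * ‖x‖ ^ 2) / ‖x - c‖) volume := by
  refine Integrable.mono' ((g1_integrable c).add (integrable_gauss hb))
    (meas_gauss_div b c).aestronglyMeasurable
    (Filter.Eventually.of_forall fun x => ?_)
  rw [Real.norm_eq_abs, abs_of_nonneg (gauss_div_nonneg c x)]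
  exact gauss_div_bound hb.le c x

lemma integral_gauss_div_le {b : ℝ} (hb : 0 < b) (c : E3) :
    ∫ x : E3, Real.exp (-b * ‖x‖ ^ 2) / ‖x - c‖
      ≤ (∫ y in ball (0:E3) 1, ‖y‖⁻¹) + ∫ x : E3, Real.exp (-b * ‖x‖ ^ 2) := by
  calc ∫ x : E3, Real.exp (-b * ‖x‖ ^ 2) / ‖x - c‖
      ≤ ∫ x : E3, (g1 c x + Real.exp (-b * ‖x‖ ^ 2)) := by
        refine integral_mono_of_nonneg (Filter.Eventually.of_forall fun x => gauss_div_nonneg c x)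
          ((g1_integrable c).add (integrable_gauss hb))
          (Filter.Eventually.of_forall fun x => gauss_div_bound hb.le c x)
    _ = (∫ x : E3, g1 c x) + ∫ x : E3, Real.exp (-b * ‖x‖ ^ 2) :=
        integral_add (g1_integrable c) (integrable_gauss hb)
    _ = (∫ y in ball (0:E3) 1, ‖y‖⁻¹) + ∫ x : E3, Real.exp (-b * ‖x‖ ^ 2) := by
        rw [g1_integral]

/-- The Landau quadratic form. -/
def Qf (z u : E3) : ℝ := ∑ i, ∑ j, Phi z i j * u i * u j

lemma norm_sq_eq (u : E3) : ‖u‖ ^ 2 = ∑ i, u i ^ 2 := by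
  rw [EuclideanSpace.norm_eq, Real.sq_sqrt (by positivity)]
  simp [Real.norm_eq_abs, sq_abs]

lemma Qf_eq (z u : E3) :
    Qf z u = (∑ i, u i ^ 2) / ‖z‖ - (∑ i, z i * u i) ^ 2 / ‖z‖ ^ 3 := by
  unfold Qf Phi
  simp only [sub_mul, Finset.sum_sub_distrib]
  congr 1
  · rw [Finset.sum_div]
    refine Finset.sum_congr rfl fun i _ => ?_
    refine (Finset.sum_eq_single i ?_ ?_).trans ?_
    · intro j _ hj
      simp [Ne.symm hj]
    · simp
    · rw [if_pos rfl]
      ring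
  · rw [sq, Finset.sum_mul_sum, Finset.sum_div]
    refine Finset.sum_congr rfl fun i _ => ?_
    rw [Finset.sum_div]
    refine Finset.sum_congr rfl fun j _ => ?_
    ring

lemma abs_apply_le_norm (z : E3) (i : Fin 3) : |z i| ≤ ‖z‖ := by
  have h1 : z i ^ 2 ≤ ‖z‖ ^ 2 := by
    rw [norm_sq_eq]
    exact Finset.single_le_sum (f := fun k => z k ^ 2) (fun k _ => sq_nonneg _)
      (Finset.mem_univ i)
  nlinarith [abs_nonneg (z i), norm_nonneg z, sq_abs (z i)]

lemma Phi_abs_le (z : E3) (i j : Fin 3) : |Phi z i j| ≤ 2 / ‖z‖ := by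
  rcases eq_or_lt_of_le (norm_nonneg z) with h0 | h0
  · have hz : z = 0 := by rwa [eq_comm, norm_eq_zero] at h0
    subst hz
    simp [Phi]
  · unfold Phi
    have h1 : |(if i = j then (1:ℝ) else 0) / ‖z‖| ≤ 1 / ‖z‖ := by
      split_ifs
      · rw [abs_div, abs_one, abs_of_pos h0]
      · rw [zero_div, abs_zero]
        positivity
    have h2 : |z i * z j / ‖z‖ ^ 3| ≤ 1 / ‖z‖ := by
      rw [abs_div, abs_mul, abs_of_pos (by positivity : (0:ℝ) < ‖z‖ ^ 3)]
      rw [div_le_div_iff₀ (by positivity) h0]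
      have hi := abs_apply_le_norm z i
      have hj := abs_apply_le_norm z j
      have hmul : |z i| * |z j| ≤ ‖z‖ * ‖z‖ :=
        mul_le_mul hi hj (abs_nonneg _) (norm_nonneg z)
      nlinarith [h0.le]
    calc |(if i = j then (1:ℝ) else 0) / ‖z‖ - z i * z j / ‖z‖ ^ 3|
        ≤ |(if i = j then (1:ℝ) else 0) / ‖z‖| + |z i * z j / ‖z‖ ^ 3| := abs_sub _ _
      _ ≤ 1 / ‖z‖ + 1 / ‖z‖ := add_le_add h1 h2
      _ = 2 / ‖z‖ := by ring

lemma Qf_nonneg (z u : E3) : 0 ≤ Qf z u := by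
  rw [Qf_eq]
  rcases eq_or_lt_of_le (norm_nonneg z) with h0 | h0
  · rw [← h0]; simp
  · have hCS : (∑ i, z i * u i) ^ 2 ≤ ‖z‖ ^ 2 * ‖u‖ ^ 2 := by
      have h := real_inner_mul_inner_self_le z u
      rw [real_inner_self_eq_norm_sq, real_inner_self_eq_norm_sq] at h
      have hi : (inner ℝ z u : ℝ) = ∑ i, z i * u i := by
        rw [PiLp.inner_apply]; simp [RCLike.inner_apply, mul_comm]
      rw [hi] at h
      nlinarith [h]
    rw [sub_nonneg, div_le_div_iff₀ (by positivity) (by positivity)]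
    rw [norm_sq_eq u] at hCS
    nlinarith [hCS, h0]

lemma Qf_le (z u : E3) : Qf z u ≤ ‖u - z‖ ^ 2 / ‖z‖ := by
  rw [Qf_eq]
  rcases eq_or_lt_of_le (norm_nonneg z) with h0 | h0
  · rw [← h0]; simp
  · set r := ‖z‖ with hr
    set t : ℝ := ∑ i, z i * u i with ht
    have hip : (inner ℝ u z : ℝ) = t := by
      rw [ht, PiLp.inner_apply]
      simp [RCLike.inner_apply, mul_comm]
    have hexp : ‖u - z‖ ^ 2 = (∑ i, u i ^ 2) - 2 * t + r ^ 2 := by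
      rw [norm_sub_sq_real, hip, hr, norm_sq_eq]
    rw [hexp]
    have key : ((∑ i, u i ^ 2) / r - t ^ 2 / r ^ 3)
        - ((∑ i, u i ^ 2) - 2 * t + r ^ 2) / r = -((r ^ 2 - t) ^ 2 / r ^ 3) := by
      field_simp
      ring
    have h4 : (0:ℝ) ≤ (r ^ 2 - t) ^ 2 / r ^ 3 := by positivity
    linarith [key, h4]

lemma Qf_smul (z : E3) (ε : ℝ) (v : E3) : Qf z (ε • v) = ε ^ 2 * Qf z v := by
  rw [Qf_eq, Qf_eq]
  have h1 : ∑ i, (ε • v) i ^ 2 = ε ^ 2 * ∑ i, v i ^ 2 := by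
    rw [Finset.mul_sum]
    refine Finset.sum_congr rfl fun i _ => ?_
    simp [PiLp.smul_apply, smul_eq_mul]
    ring
  have h2 : ∑ i, z i * (ε • v) i = ε * ∑ i, z i * v i := by
    rw [Finset.mul_sum]
    refine Finset.sum_congr rfl fun i _ => ?_
    simp [PiLp.smul_apply, smul_eq_mul]
    ring
  rw [h1, h2]
  ring

lemma Qf_key {ε : ℝ} (hε : 0 < ε) (ξ w : E3) :
    Qf (ε⁻¹ • ξ - w) ξ ≤ ε ^ 3 * (‖w‖ ^ 2 / ‖ξ - ε • w‖) := by
  have hξ : ξ = ε • (ε⁻¹ • ξ) := by rw [smul_smul, mul_inv_cancel₀ hε.ne', one_smul]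
  set v := ε⁻¹ • ξ with hv
  have hnorm : ‖v - w‖ = ε⁻¹ * ‖ξ - ε • w‖ := by
    have h3 : v - w = ε⁻¹ • (ξ - ε • w) := by
      rw [smul_sub, smul_smul, inv_mul_cancel₀ hε.ne', one_smul, hv]
    rw [h3, norm_smul, Real.norm_eq_abs, abs_of_pos (inv_pos.2 hε)]
  calc Qf (v - w) ξ = ε ^ 2 * Qf (v - w) v := by
        conv_lhs => rw [hξ]
        exact Qf_smul _ _ _
    _ ≤ ε ^ 2 * (‖v - (v - w)‖ ^ 2 / ‖v - w‖) := by
        have := Qf_le (v - w) v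
        nlinarith [sq_nonneg ε]
    _ = ε ^ 2 * (‖w‖ ^ 2 / (ε⁻¹ * ‖ξ - ε • w‖)) := by rw [sub_sub_cancel, hnorm]
    _ = ε ^ 3 * (‖w‖ ^ 2 / ‖ξ - ε • w‖) := by
        rw [div_eq_mul_inv, mul_inv, inv_inv, div_eq_mul_inv]
        ring

def c0 : ℝ := ((1:ℝ) / (2 * π)) ^ ((3:ℝ) / 2)

lemma c0_pos : 0 < c0 := by
  unfold c0
  exact Real.rpow_pos_of_pos (by positivity) _

lemma maxw_one_eq (w : E3) : maxw 1 w = c0 * Real.exp (-(1/2 : ℝ) * ‖w‖ ^ 2) := by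
  unfold maxw c0
  rw [show (-1 : ℝ) * ‖w‖ ^ 2 / 2 = -(1/2:ℝ) * ‖w‖ ^ 2 by ring]

lemma maxw_nonneg (w : E3) : 0 ≤ maxw 1 w := by
  rw [maxw_one_eq]
  exact mul_nonneg c0_pos.le (Real.exp_nonneg _)

lemma maxw_measurable : Measurable (maxw 1) := by
  unfold maxw
  fun_prop

lemma Phi_meas (v : E3) (i j : Fin 3) : Measurable (fun w : E3 => Phi (v - w) i j) := by
  unfold Phi
  fun_prop

lemma integrable_Phi_maxw (v : E3) (i j : Fin 3) :
    Integrable (fun w : E3 => Phi (v - w) i j * maxw 1 w) volume := by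
  have hg : Integrable
      (fun w : E3 => (2 * c0) * (Real.exp (-(1/2:ℝ) * ‖w‖ ^ 2) / ‖w - v‖)) volume :=
    (integrable_gauss_div (by norm_num) v).const_mul _
  refine Integrable.mono' hg ((Phi_meas v i j).mul maxw_measurable).aestronglyMeasurable
    (Filter.Eventually.of_forall fun w => ?_)
  rw [Real.norm_eq_abs, abs_mul, abs_of_nonneg (maxw_nonneg w), maxw_one_eq]
  have h1 : |Phi (v - w) i j| ≤ 2 / ‖v - w‖ := Phi_abs_le _ i j
  calc |Phi (v - w) i j| * (c0 * Real.exp (-(1/2:ℝ) * ‖w‖ ^ 2))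
      ≤ (2 / ‖v - w‖) * (c0 * Real.exp (-(1/2:ℝ) * ‖w‖ ^ 2)) :=
        mul_le_mul_of_nonneg_right h1 (mul_nonneg c0_pos.le (Real.exp_nonneg _))
    _ = (2 * c0) * (Real.exp (-(1/2:ℝ) * ‖w‖ ^ 2) / ‖w - v‖) := by
        rw [norm_sub_rev]
        ring

lemma sigma_form (v ξ : E3) :
    (∑ i, ∑ j, sigmaM i j v * ξ i * ξ j) = ∫ w : E3, Qf (v - w) ξ * maxw 1 w := by
  have hI : ∀ i j : Fin 3,
      Integrable (fun w : E3 => Phi (v - w) i j * maxw 1 w * (ξ i * ξ j)) volume :=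
    fun i j => (integrable_Phi_maxw v i j).mul_const _
  calc ∑ i, ∑ j, sigmaM i j v * ξ i * ξ j
      = ∑ i, ∑ j, ∫ w : E3, Phi (v - w) i j * maxw 1 w * (ξ i * ξ j) := by
        refine Finset.sum_congr rfl fun i _ => Finset.sum_congr rfl fun j _ => ?_
        unfold sigmaM convPhi
        rw [integral_mul_const (ξ i * ξ j) (fun w => Phi (v - w) i j * maxw 1 w), mul_assoc]
    _ = ∑ i, ∫ w : E3, ∑ j, Phi (v - w) i j * maxw 1 w * (ξ i * ξ j) :=
        Finset.sum_congr rfl fun i _ => (integral_finset_sum _ (fun j _ => hI i j)).symm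
    _ = ∫ w : E3, ∑ i, ∑ j, Phi (v - w) i j * maxw 1 w * (ξ i * ξ j) :=
        (integral_finset_sum _
          (fun i _ => integrable_finset_sum _ (fun j _ => hI i j))).symm
    _ = ∫ w : E3, Qf (v - w) ξ * maxw 1 w := by
        refine integral_congr_ae (Filter.Eventually.of_forall fun w => ?_)
        show ∑ i, ∑ j, Phi (v - w) i j * maxw 1 w * (ξ i * ξ j)
          = Qf (v - w) ξ * maxw 1 w
        unfold Qf
        rw [Finset.sum_mul]
        refine Finset.sum_congr rfl fun i _ => ?_
        rw [Finset.sum_mul]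
        refine Finset.sum_congr rfl fun j _ => ?_
        ring

lemma moment_bound (w : E3) :
    ‖w‖ ^ 2 * maxw 1 w ≤ (4 * c0) * Real.exp (-(1/4:ℝ) * ‖w‖ ^ 2) := by
  rw [maxw_one_eq]
  set s := ‖w‖ ^ 2 with hs
  have hs0 : 0 ≤ s := sq_nonneg _
  have h1 : s ≤ 4 * Real.exp ((1/4:ℝ) * s) := by
    nlinarith [Real.add_one_le_exp ((1/4:ℝ) * s)]
  have h2 := mul_le_mul_of_nonneg_right h1 (Real.exp_nonneg (-(1/4:ℝ) * s))
  rw [mul_assoc, ← Real.exp_add, show (1/4:ℝ) * s + -(1/4:ℝ) * s = 0 by ring,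
    Real.exp_zero, mul_one] at h2
  have hsplit : Real.exp (-(1/2:ℝ) * s) =
      Real.exp (-(1/4:ℝ) * s) * Real.exp (-(1/4:ℝ) * s) := by
    rw [← Real.exp_add]
    congr 1
    ring
  calc s * (c0 * Real.exp (-(1/2:ℝ) * s))
      = c0 * Real.exp (-(1/4:ℝ) * s) * (s * Real.exp (-(1/4:ℝ) * s)) := by
        rw [hsplit]; ring
    _ ≤ c0 * Real.exp (-(1/4:ℝ) * s) * 4 := by
        refine mul_le_mul_of_nonneg_left h2 (mul_nonneg c0_pos.le (Real.exp_nonneg _))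
    _ = (4 * c0) * Real.exp (-(1/4:ℝ) * s) := by ring

lemma integrable_moment : Integrable (fun w : E3 => ‖w‖ ^ 2 * maxw 1 w) volume := by
  refine Integrable.mono'
    ((integrable_gauss (b := (1/4:ℝ)) (by norm_num)).const_mul (4 * c0))
    ?_ (Filter.Eventually.of_forall fun w => ?_)
  · exact ((measurable_norm.pow_const 2).mul maxw_measurable).aestronglyMeasurable
  · rw [Real.norm_eq_abs, abs_of_nonneg (mul_nonneg (sq_nonneg _) (maxw_nonneg w))]
    have := moment_bound w
    calc ‖w‖ ^ 2 * maxw 1 w ≤ (4 * c0) * Real.exp (-(1/4:ℝ) * ‖w‖ ^ 2) := this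
      _ = 4 * c0 * Real.exp (-(1/4:ℝ) * ‖w‖ ^ 2) := by ring

lemma norm_scale {ε : ℝ} (hε : 0 < ε) (ξ w : E3) :
    ‖ξ - ε • w‖ = ε * ‖ε⁻¹ • ξ - w‖ := by
  have h3 : ε⁻¹ • ξ - w = ε⁻¹ • (ξ - ε • w) := by
    rw [smul_sub, smul_smul, inv_mul_cancel₀ hε.ne', one_smul]
  rw [h3, norm_smul, Real.norm_eq_abs, abs_of_pos (inv_pos.2 hε), ← mul_assoc,
    mul_inv_cancel₀ hε.ne', one_mul]

lemma B_integrand_bound {ε : ℝ} (hε : 0 < ε) (ξ w : E3) :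
    (‖w‖ ^ 2 * maxw 1 w) / ‖ξ - ε • w‖
      ≤ (ε⁻¹ * (4 * c0)) * (Real.exp (-(1/4:ℝ) * ‖w‖ ^ 2) / ‖w - ε⁻¹ • ξ‖) := by
  have hn : ‖ξ - ε • w‖ = ε * ‖w - ε⁻¹ • ξ‖ := by rw [norm_scale hε, norm_sub_rev]
  rcases eq_or_lt_of_le (norm_nonneg (w - ε⁻¹ • ξ)) with h0 | h0
  · rw [hn, ← h0, mul_zero, div_zero, div_zero, mul_zero]
  · rw [hn]
    set n := ‖w - ε⁻¹ • ξ‖ with hndef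
    have key : (‖w‖ ^ 2 * maxw 1 w) / (ε * n) = ε⁻¹ * ((‖w‖ ^ 2 * maxw 1 w) / n) := by
      field_simp
    rw [key, mul_assoc]
    refine mul_le_mul_of_nonneg_left ?_ (inv_nonneg.2 hε.le)
    rw [← mul_div_assoc, div_le_div_iff₀ h0 h0]
    exact mul_le_mul_of_nonneg_right (moment_bound w) h0.le

lemma B_integrable {ε : ℝ} (hε : 0 < ε) (ξ : E3) :
    Integrable (fun w : E3 => (‖w‖ ^ 2 * maxw 1 w) / ‖ξ - ε • w‖) volume := by
  refine Integrable.mono'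
    (((integrable_gauss_div (b := (1/4:ℝ)) (by norm_num) (ε⁻¹ • ξ))).const_mul
      (ε⁻¹ * (4 * c0)))
    ?_ (Filter.Eventually.of_forall fun w => ?_)
  · apply Measurable.aestronglyMeasurable
    apply Measurable.div
    · exact (measurable_norm.pow_const 2).mul maxw_measurable
    · fun_prop
  · rw [Real.norm_eq_abs,
      abs_of_nonneg (div_nonneg (mul_nonneg (sq_nonneg _) (maxw_nonneg w)) (norm_nonneg _))]
    exact B_integrand_bound hε ξ w

end Stmt19Aux

open Stmt19Aux Metric in
/-- Vanishing of the rescaled ion–electron dissipation on Gaussians: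
`ε⁻¹ ∫ ξ·σ(ξ/ε)ξ e^{−a|ξ|²} dξ ≤ C ε²`. -/
theorem stmt_19 (a : ℝ) (ha : 0 < a) :
    ∃ C > (0:ℝ), ∀ ε ∈ Set.Ioc (0:ℝ) 1,
      ε⁻¹ * (∫ ξ : E3, (∑ i, ∑ j, sigmaM i j (ε⁻¹ • ξ) * ξ i * ξ j)
          * Real.exp (-a * ‖ξ‖ ^ 2))
        ≤ C * ε ^ 2 := by
  classical
  set K1 := ∫ y in ball (0:E3) 1, ‖y‖⁻¹ with hK1def
  set K2 := ∫ x : E3, Real.exp (-a * ‖x‖ ^ 2) with hK2def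
  set K := K1 + K2 with hKdef
  set M := ∫ w : E3, ‖w‖ ^ 2 * maxw 1 w with hMdef
  have hK1n : 0 ≤ K1 := setIntegral_nonneg measurableSet_ball fun y _ => by positivity
  have hK2n : 0 ≤ K2 := integral_nonneg fun x => Real.exp_nonneg _
  have hKn : 0 ≤ K := add_nonneg hK1n hK2n
  have hMn : 0 ≤ M := integral_nonneg fun w => mul_nonneg (sq_nonneg _) (maxw_nonneg w)
  refine ⟨K * M + 1, by positivity, ?_⟩
  rintro ε ⟨hε0, hε1⟩
  set B : E3 → ℝ := fun ξ => ∫ w : E3, (‖w‖ ^ 2 * maxw 1 w) / ‖ξ - ε • w‖ with hBdef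
  set F : E3 × E3 → ℝ := fun p =>
    (‖p.2‖ ^ 2 * maxw 1 p.2) * (Real.exp (-a * ‖p.1‖ ^ 2) / ‖p.1 - ε • p.2‖) with hFdef
  have hFm : Measurable F := by
    apply Measurable.mul
    · exact ((measurable_norm.comp measurable_snd).pow_const 2).mul
        (maxw_measurable.comp measurable_snd)
    · apply Measurable.div
      · fun_prop
      · fun_prop
  have hFnonneg : ∀ p, 0 ≤ F p := fun p =>
    mul_nonneg (mul_nonneg (sq_nonneg _) (maxw_nonneg _)) (by positivity)
  -- sections in ξ are integrable, with uniformly bounded integral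
  have hsec : ∀ w : E3, Integrable (fun ξ : E3 => F (ξ, w)) volume := fun w =>
    (integrable_gauss_div ha (ε • w)).const_mul (‖w‖ ^ 2 * maxw 1 w)
  have hsecint : ∀ w : E3, (∫ ξ : E3, F (ξ, w)) ≤ (‖w‖ ^ 2 * maxw 1 w) * K := by
    intro w
    have h1 : (∫ ξ : E3, F (ξ, w))
        = (‖w‖ ^ 2 * maxw 1 w) * ∫ ξ : E3, Real.exp (-a * ‖ξ‖ ^ 2) / ‖ξ - ε • w‖ := by
      calc (∫ ξ : E3, F (ξ, w))
          = ∫ ξ : E3, (‖w‖ ^ 2 * maxw 1 w) * (Real.exp (-a * ‖ξ‖ ^ 2) / ‖ξ - ε • w‖) := rfl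
        _ = (‖w‖ ^ 2 * maxw 1 w) * ∫ ξ : E3, Real.exp (-a * ‖ξ‖ ^ 2) / ‖ξ - ε • w‖ :=
            integral_const_mul _ _
    rw [h1]
    exact mul_le_mul_of_nonneg_left (integral_gauss_div_le ha (ε • w))
      (mul_nonneg (sq_nonneg _) (maxw_nonneg w))
  -- product integrability
  have hFint : Integrable F (volume.prod volume) := by
    rw [integrable_prod_iff' hFm.aestronglyMeasurable]
    constructor
    · exact Filter.Eventually.of_forall hsec
    · have hmeas2 : AEStronglyMeasurable (fun w : E3 => ∫ ξ : E3, ‖F (ξ, w)‖) volume := by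
        have hswap : AEStronglyMeasurable (fun q : E3 × E3 => ‖F (q.2, q.1)‖)
            (volume.prod volume) :=
          ((hFm.comp measurable_swap).norm).aestronglyMeasurable
        exact hswap.integral_prod_right'
      refine Integrable.mono' (integrable_moment.mul_const K) hmeas2
        (Filter.Eventually.of_forall fun w => ?_)
      have hval : (∫ ξ : E3, ‖F (ξ, w)‖) = ∫ ξ : E3, F (ξ, w) :=
        integral_congr_ae (Filter.Eventually.of_forall fun ξ => by
          show ‖F (ξ, w)‖ = F (ξ, w)
          rw [Real.norm_eq_abs, abs_of_nonneg (hFnonneg _)])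
      rw [Real.norm_eq_abs, hval,
        abs_of_nonneg (integral_nonneg fun ξ => hFnonneg _)]
      exact hsecint w
  -- pointwise: the sigma quadratic form is nonneg and bounded by ε³ B ξ
  have hS : ∀ ξ : E3, 0 ≤ ∑ i, ∑ j, sigmaM i j (ε⁻¹ • ξ) * ξ i * ξ j := by
    intro ξ
    rw [sigma_form]
    exact integral_nonneg fun w => mul_nonneg (Qf_nonneg _ _) (maxw_nonneg w)
  have hSB : ∀ ξ : E3, (∑ i, ∑ j, sigmaM i j (ε⁻¹ • ξ) * ξ i * ξ j) ≤ ε ^ 3 * B ξ := by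
    intro ξ
    rw [sigma_form]
    calc ∫ w : E3, Qf (ε⁻¹ • ξ - w) ξ * maxw 1 w
        ≤ ∫ w : E3, ε ^ 3 * ((‖w‖ ^ 2 * maxw 1 w) / ‖ξ - ε • w‖) := by
          refine integral_mono_of_nonneg
            (Filter.Eventually.of_forall fun w =>
              mul_nonneg (Qf_nonneg _ _) (maxw_nonneg w))
            ((B_integrable hε0 ξ).const_mul _)
            (Filter.Eventually.of_forall fun w => ?_)
          have h := mul_le_mul_of_nonneg_right (Qf_key hε0 ξ w) (maxw_nonneg w)
          refine h.trans_eq ?_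
          ring
      _ = ε ^ 3 * B ξ := integral_const_mul _ _
  -- relation between F and B
  have hFB : ∀ ξ : E3, (∫ w : E3, F (ξ, w)) = Real.exp (-a * ‖ξ‖ ^ 2) * B ξ := by
    intro ξ
    calc (∫ w : E3, F (ξ, w))
        = ∫ w : E3, Real.exp (-a * ‖ξ‖ ^ 2) * ((‖w‖ ^ 2 * maxw 1 w) / ‖ξ - ε • w‖) := by
          refine integral_congr_ae (Filter.Eventually.of_forall fun w => ?_)
          show (‖w‖ ^ 2 * maxw 1 w) * (Real.exp (-a * ‖ξ‖ ^ 2) / ‖ξ - ε • w‖)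
            = Real.exp (-a * ‖ξ‖ ^ 2) * ((‖w‖ ^ 2 * maxw 1 w) / ‖ξ - ε • w‖)
          ring
      _ = Real.exp (-a * ‖ξ‖ ^ 2) * B ξ := integral_const_mul _ _
  -- main integral bound
  have hmain : (∫ ξ : E3, (∑ i, ∑ j, sigmaM i j (ε⁻¹ • ξ) * ξ i * ξ j)
      * Real.exp (-a * ‖ξ‖ ^ 2)) ≤ ε ^ 3 * (M * K) := by
    calc (∫ ξ : E3, (∑ i, ∑ j, sigmaM i j (ε⁻¹ • ξ) * ξ i * ξ j)
          * Real.exp (-a * ‖ξ‖ ^ 2))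
        ≤ ∫ ξ : E3, ε ^ 3 * ∫ w : E3, F (ξ, w) := by
          refine integral_mono_of_nonneg
            (Filter.Eventually.of_forall fun ξ =>
              mul_nonneg (hS ξ) (Real.exp_nonneg _))
            ((hFint.integral_prod_left).const_mul _)
            (Filter.Eventually.of_forall fun ξ => ?_)
          show (∑ i, ∑ j, sigmaM i j (ε⁻¹ • ξ) * ξ i * ξ j) * Real.exp (-a * ‖ξ‖ ^ 2)
            ≤ ε ^ 3 * ∫ w : E3, F (ξ, w)
          rw [hFB ξ]
          calc (∑ i, ∑ j, sigmaM i j (ε⁻¹ • ξ) * ξ i * ξ j) * Real.exp (-a * ‖ξ‖ ^ 2)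
              ≤ (ε ^ 3 * B ξ) * Real.exp (-a * ‖ξ‖ ^ 2) :=
                mul_le_mul_of_nonneg_right (hSB ξ) (Real.exp_nonneg _)
            _ = ε ^ 3 * (Real.exp (-a * ‖ξ‖ ^ 2) * B ξ) := by ring
      _ = ε ^ 3 * ∫ ξ : E3, ∫ w : E3, F (ξ, w) := integral_const_mul _ _
      _ = ε ^ 3 * ∫ w : E3, ∫ ξ : E3, F (ξ, w) := by
          rw [integral_integral_swap hFint]
      _ ≤ ε ^ 3 * ∫ w : E3, (‖w‖ ^ 2 * maxw 1 w) * K := by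
          refine mul_le_mul_of_nonneg_left ?_ (by positivity)
          refine integral_mono_of_nonneg
            (Filter.Eventually.of_forall fun w => integral_nonneg fun ξ => hFnonneg _)
            (integrable_moment.mul_const K)
            (Filter.Eventually.of_forall fun w => hsecint w)
      _ = ε ^ 3 * (M * K) := by rw [integral_mul_const]
  -- conclude
  have hfinal : ε⁻¹ * (∫ ξ : E3, (∑ i, ∑ j, sigmaM i j (ε⁻¹ • ξ) * ξ i * ξ j)
      * Real.exp (-a * ‖ξ‖ ^ 2)) ≤ ε⁻¹ * (ε ^ 3 * (M * K)) :=
    mul_le_mul_of_nonneg_left hmain (inv_nonneg.2 hε0.le)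
  have hpow : ε⁻¹ * (ε ^ 3 * (M * K)) = (M * K) * ε ^ 2 := by
    field_simp
  calc ε⁻¹ * (∫ ξ : E3, (∑ i, ∑ j, sigmaM i j (ε⁻¹ • ξ) * ξ i * ξ j)
        * Real.exp (-a * ‖ξ‖ ^ 2))
      ≤ (M * K) * ε ^ 2 := by rw [← hpow]; exact hfinal
    _ ≤ (K * M + 1) * ε ^ 2 := by nlinarith [sq_nonneg ε, mul_pos hε0 hε0]


end
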